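/- Let f, g : [0,1] → [0,1]² be continuous functions such that f(0) = (0,0), f(1) = (1,1), g(0) = (0,1), g(1) = (1,0), and such that f(t) ∈ (0,1)² and g(t) ∈ (0,1)² for every t with 0 < t < 1. Then there exist s, t ∈ (0,1) with f(s) = g(t), and this common point lies in the open unit square (0,1)². -/

import Mathlib

open Set
set_option maxHeartbeats 1000000

noncomputable section

/-- The Euclidean plane. -/
abbrev E2 := EuclideanSpace ℝ (Fin 2)

/-- The point `(x, y)` of the Euclidean plane. -/
def pt (x y : ℝ) : E2 := WithLp.toLp 2 ![x, y]

/-- The closed unit square `[0,1]²`. -/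
def unitSq : Set E2 := {p | p 0 ∈ Icc (0:ℝ) 1 ∧ p 1 ∈ Icc (0:ℝ) 1}

/-- The open unit square `(0,1)²`. -/
def openUnitSq : Set E2 := {p | p 0 ∈ Ioo (0:ℝ) 1 ∧ p 1 ∈ Ioo (0:ℝ) 1}



/-- `θ` is a continuous argument lift of the nonvanishing path `w` on `s`. -/
def IsLiftOn (θ : ℝ → ℝ) (w : ℝ → ℂ) (s : Set ℝ) : Prop :=
  ContinuousOn θ s ∧ ∀ t ∈ s, w t = (‖w t‖ : ℂ) * Complex.exp (θ t * Complex.I)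

lemma IsLiftOn.mono {θ : ℝ → ℝ} {w : ℝ → ℂ} {s s' : Set ℝ} (h : IsLiftOn θ w s) (hs : s' ⊆ s) :
    IsLiftOn θ w s' :=
  ⟨h.1.mono hs, fun t ht => h.2 t (hs ht)⟩

/-- two lifts of the same path differ by a constant. -/
lemma IsLiftOn.sub_eq {θ₁ θ₂ : ℝ → ℝ} {w : ℝ → ℂ} {a b : ℝ}
    (h₁ : IsLiftOn θ₁ w (Icc a b)) (h₂ : IsLiftOn θ₂ w (Icc a b))
    (h0 : ∀ t ∈ Icc a b, w t ≠ 0) {t : ℝ} (ht : t ∈ Icc a b) :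
    θ₁ t - θ₂ t = θ₁ a - θ₂ a := by
  have ha : a ∈ Icc a b := left_mem_Icc.2 (ht.1.trans ht.2)
  have key : ∀ s ∈ Icc a b, ∃ n : ℤ, θ₁ s - θ₂ s = n * (2 * Real.pi) := by
    intro s hs
    have e1 := h₁.2 s hs
    have e2 := h₂.2 s hs
    have habs : (‖w s‖ : ℂ) ≠ 0 := by
      simp only [ne_eq, Complex.ofReal_eq_zero, norm_eq_zero]
      exact h0 s hs
    have : Complex.exp (θ₁ s * Complex.I) = Complex.exp (θ₂ s * Complex.I) :=
      mul_left_cancel₀ habs (e1 ▸ e2 ▸ rfl)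
    rw [Complex.exp_eq_exp_iff_exists_int] at this
    obtain ⟨n, hn⟩ := this
    refine ⟨n, ?_⟩
    have : ((θ₁ s - θ₂ s - n * (2 * Real.pi) : ℝ) : ℂ) * Complex.I = 0 := by
      push_cast
      rw [sub_mul, sub_mul, hn]
      ring
    have := (mul_eq_zero.1 this).resolve_right Complex.I_ne_zero
    have := Complex.ofReal_eq_zero.1 this
    linarith
  by_contra hne
  obtain ⟨n, hn⟩ := key t ht
  obtain ⟨m, hm⟩ := key a ha
  have hd : ContinuousOn (fun s => θ₁ s - θ₂ s) (Icc a b) := h₁.1.sub h₂.1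
  have hnm : n ≠ m := by
    rintro rfl; exact hne (hn.trans hm.symm)
  have hsub : uIcc a t ⊆ Icc a b := uIcc_subset_Icc ha ht
  have hivt := intermediate_value_uIcc (hd.mono hsub)
  have hpi := Real.pi_pos
  -- pick y := 2πm ± π strictly between the two endpoint values
  rcases lt_or_gt_of_ne hnm with h | h
  · -- n < m, use y = 2πm - π
    have hy : (2 * m - 1) * Real.pi ∈ uIcc ((fun s => θ₁ s - θ₂ s) a) ((fun s => θ₁ s - θ₂ s) t) := by
      simp only [hm, hn]
      rw [mem_uIcc]
      right
      constructor
      · have h1 : (n:ℝ) + 1 ≤ (m:ℝ) := by exact_mod_cast Int.add_one_le_iff.2 h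
        nlinarith
      · nlinarith
    obtain ⟨u, hu, hu2⟩ := hivt hy
    simp only at hu2
    obtain ⟨k, hk⟩ := key u (hsub hu)
    rw [hu2] at hk
    have : (2*m - 1 : ℝ) = 2 * k := by
      have h2 : ((2*m - 1 : ℝ) - 2*k) * Real.pi = 0 := by linarith [hk]
      rcases mul_eq_zero.1 h2 with h3 | h3
      · linarith
      · linarith
    have : (2*m - 1 : ℤ) = 2 * k := by exact_mod_cast this
    omega
  · -- n > m, use y = 2πm + π
    have hy : (2 * m + 1) * Real.pi ∈ uIcc ((fun s => θ₁ s - θ₂ s) a) ((fun s => θ₁ s - θ₂ s) t) := by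
      simp only [hm, hn]
      rw [mem_uIcc]
      left
      constructor
      · nlinarith
      · have h1 : (m:ℝ) + 1 ≤ (n:ℝ) := by exact_mod_cast Int.add_one_le_iff.2 h
        nlinarith
    obtain ⟨u, hu, hu2⟩ := hivt hy
    simp only at hu2
    obtain ⟨k, hk⟩ := key u (hsub hu)
    rw [hu2] at hk
    have : (2*m + 1 : ℝ) = 2 * k := by
      have h2 : ((2*m + 1 : ℝ) - 2*k) * Real.pi = 0 := by linarith [hk]
      rcases mul_eq_zero.1 h2 with h3 | h3
      · linarith
      · linarith
    have : (2*m + 1 : ℤ) = 2 * k := by exact_mod_cast this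
    omega

lemma div_mem_slitPlane_of_close {z z₀ : ℂ} (hz₀ : z₀ ≠ 0)
    (h : ‖z - z₀‖ < ‖z₀‖) : z / z₀ ∈ Complex.slitPlane := by
  rw [Complex.mem_slitPlane_iff]
  left
  have h1 : ‖z / z₀ - 1‖ < 1 := by
    have : z / z₀ - 1 = (z - z₀) / z₀ := by field_simp
    rw [this, norm_div]
    rw [div_lt_one (norm_pos_iff.2 hz₀)]
    exact h
  have h2 : |(z / z₀ - 1).re| ≤ ‖z / z₀ - 1‖ := Complex.abs_re_le_norm _
  have h3 : (z / z₀ - 1).re = (z / z₀).re - 1 := by simp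
  have := abs_lt.1 (lt_of_le_of_lt h2 h1)
  linarith [this.1]

lemma lift_step_eq {z z₀ : ℂ} {θ₀ : ℝ} (hz : z ≠ 0) (hz₀ : z₀ ≠ 0)
    (h : z₀ = (‖z₀‖ : ℂ) * Complex.exp (θ₀ * Complex.I)) :
    z = (‖z‖ : ℂ) * Complex.exp (((θ₀ + Complex.arg (z / z₀) : ℝ) : ℂ) * Complex.I) := by
  rw [Complex.ofReal_add]
  have habs : ‖z‖ ≠ 0 := by simpa using hz
  have habs₀ : ‖z₀‖ ≠ 0 := by simpa using hz₀
  have habsu : ‖z/z₀‖ ≠ 0 := by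
    rw [norm_div]
    exact div_ne_zero habs habs₀
  have e1 : Complex.exp (θ₀ * Complex.I) = z₀ / (‖z₀‖ : ℂ) := by
    rw [eq_div_iff (Complex.ofReal_ne_zero.2 habs₀), mul_comm]
    exact h.symm
  have e3 : Complex.exp (Complex.arg (z/z₀) * Complex.I) = (z/z₀) / (‖z/z₀‖ : ℂ) := by
    rw [eq_div_iff (Complex.ofReal_ne_zero.2 habsu), mul_comm]
    exact Complex.norm_mul_exp_arg_mul_I _
  rw [add_mul, Complex.exp_add, e1, e3, norm_div]
  push_cast
  field_simp [Complex.ofReal_ne_zero.2 habs, Complex.ofReal_ne_zero.2 habs₀]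

/-- Existence of a continuous argument lift on a compact interval. -/
lemma exists_liftOn {w : ℝ → ℂ} {a b : ℝ} (hab : a ≤ b)
    (hw : ContinuousOn w (Icc a b)) (h0 : ∀ t ∈ Icc a b, w t ≠ 0) :
    ∃ θ : ℝ → ℝ, IsLiftOn θ w (Icc a b) := by
  -- minimum modulus
  obtain ⟨t₀, ht₀, hmin'⟩ := isCompact_Icc.exists_isMinOn (nonempty_Icc.2 hab)
    (continuous_norm.comp_continuousOn hw)
  have hmin : ∀ t ∈ Icc a b, ‖w t₀‖ ≤ ‖w t‖ := fun t ht => hmin' ht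
  set ε := ‖w t₀‖ with hε_def
  have hε : 0 < ε := by
    simp only [hε_def]
    exact norm_pos_iff.2 (h0 t₀ ht₀)
  -- uniform continuity
  have huc := isCompact_Icc.uniformContinuousOn_of_continuous hw
  rw [Metric.uniformContinuousOn_iff] at huc
  obtain ⟨δ, hδpos, hδ⟩ := huc ε hε
  -- extension step
  have step : ∀ c c', a ≤ c → c ≤ c' → c' ≤ b → c' - c < δ →
      (∃ θ, IsLiftOn θ w (Icc a c)) → ∃ θ, IsLiftOn θ w (Icc a c') := by
    rintro c c' hac hcc' hc'b hlt ⟨θ, hθc, hθe⟩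
    have hcmem : c ∈ Icc a b := ⟨hac, hcc'.trans hc'b⟩
    have hnear : ∀ t ∈ Icc c c', ‖w t - w c‖ < ‖w c‖ := by
      intro t htc
      have htmem : t ∈ Icc a b := ⟨hac.trans htc.1, htc.2.trans hc'b⟩
      have : dist (w t) (w c) < ε := hδ t htmem c hcmem
        (by rw [Real.dist_eq]; rw [abs_lt]; constructor <;> [linarith [htc.1]; linarith [htc.2]])
      rw [Complex.dist_eq] at this
      exact lt_of_lt_of_le this (hmin c hcmem)
    refine ⟨fun t => θ (min t c) + Complex.arg (w (max t c) / w c), ?_, ?_⟩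
    · -- continuity
      apply ContinuousOn.add
      · apply hθc.comp ((continuous_id.min continuous_const).continuousOn)
        intro t ht
        exact ⟨le_min ht.1 hac, min_le_right _ _⟩
      · have hmax : ∀ t ∈ Icc a c', max t c ∈ Icc c c' := by
          intro t ht
          exact ⟨le_max_right _ _, max_le ht.2 hcc'⟩
        have hwc : ContinuousOn (fun t => w (max t c) / w c) (Icc a c') := by
          apply ContinuousOn.div_const
          apply hw.comp ((continuous_id.max continuous_const).continuousOn)
          intro t ht
          have := hmax t ht
          exact ⟨hac.trans this.1, this.2.trans hc'b⟩
        intro t ht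
        have hslit : w (max t c) / w c ∈ Complex.slitPlane :=
          div_mem_slitPlane_of_close (h0 c hcmem) (hnear _ (hmax t ht))
        exact ContinuousAt.comp_continuousWithinAt (g := Complex.arg) (Complex.continuousAt_arg hslit) (hwc t ht)
    · -- lift equation
      intro t ht
      show w t = (‖w t‖ : ℂ) *
        Complex.exp (↑(θ (min t c) + Complex.arg (w (max t c) / w c)) * Complex.I)
      rcases le_total t c with h | h
      · rw [min_eq_left h, max_eq_right h, div_self (h0 c hcmem), Complex.arg_one, add_zero]
        exact hθe t ⟨ht.1, h⟩
      · rw [min_eq_right h, max_eq_left h]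
        have htmem : t ∈ Icc a b := ⟨ht.1, ht.2.trans hc'b⟩
        exact lift_step_eq (h0 t htmem) (h0 c hcmem) (hθe c ⟨hac, le_refl c⟩)
  -- iterate
  have main : ∀ n : ℕ, ∃ θ, IsLiftOn θ w (Icc a (min b (a + n * (δ/2)))) := by
    intro n
    induction n with
    | zero =>
      refine ⟨fun _ => Complex.arg (w a), ?_, ?_⟩
      · exact continuousOn_const
      · intro t ht
        simp only [Nat.cast_zero, zero_mul, add_zero, min_eq_right hab] at ht
        have : t = a := le_antisymm ht.2 ht.1
        rw [this]
        exact (Complex.norm_mul_exp_arg_mul_I _).symm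
    | succ n ih =>
      refine step _ _ ?_ ?_ ?_ ?_ ih
      · exact le_min hab (le_add_of_nonneg_right (by positivity))
      · apply min_le_min (le_refl b)
        have : (n : ℝ) ≤ (n : ℝ) + 1 := by linarith
        push_cast
        nlinarith [hδpos]
      · exact min_le_left _ _
      · rcases le_total b (a + n * (δ/2)) with h | h
        · rw [min_eq_left h, min_eq_left (by push_cast; nlinarith)]
          linarith
        · rw [min_eq_right h]
          have h2 : min b (a + (n+1) * (δ/2)) ≤ a + (n+1) * (δ/2) := min_le_right _ _
          push_cast at h2 ⊢
          nlinarith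
  obtain ⟨n, hn⟩ := exists_nat_ge ((b - a) / (δ/2))
  obtain ⟨θ, hθ⟩ := main n
  refine ⟨θ, ?_⟩
  have : min b (a + n * (δ/2)) = b := by
    rw [min_eq_left]
    rw [div_le_iff₀ (by positivity)] at hn
    linarith
  rwa [this] at hθ

/-- The closed ray from the origin at angle `α`. -/
def ray (α : ℝ) : Set ℂ := {z | ∃ r : ℝ, 0 ≤ r ∧ z = (r : ℂ) * Complex.exp ((α : ℂ) * Complex.I)}

/-- Continuous branch of the argument on the complement of the ray at angle `α`. -/
def argAbout (α : ℝ) (z : ℂ) : ℝ :=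
  α + Real.pi + Complex.arg (-(z * Complex.exp ((-α : ℂ) * Complex.I)))

lemma slitPlane_of_not_ray {α : ℝ} {z : ℂ} (hz : z ≠ 0) (hray : z ∉ ray α) :
    -(z * Complex.exp ((-α : ℂ) * Complex.I)) ∈ Complex.slitPlane := by
  by_contra h
  rw [Complex.mem_slitPlane_iff] at h
  push_neg at h
  obtain ⟨h1, h2⟩ := h
  set u := z * Complex.exp ((-α : ℂ) * Complex.I) with hu
  have hure : 0 ≤ u.re := by
    have : (-u).re = -u.re := by simp
    rw [this] at h1; linarith
  have huim : u.im = 0 := by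
    have : (-u).im = -u.im := by simp
    rw [this] at h2; linarith
  have hueq : u = ((u.re : ℝ) : ℂ) := Complex.ext (by simp) (by simp [huim])
  apply hray
  refine ⟨u.re, hure, ?_⟩
  have : z = u * Complex.exp ((α : ℂ) * Complex.I) := by
    rw [hu, mul_assoc, ← Complex.exp_add]
    simp
  rw [this, ← hueq]

lemma argAbout_lift {α : ℝ} {z : ℂ} (hz : z ≠ 0) :
    z = (‖z‖ : ℂ) * Complex.exp (((argAbout α z : ℝ) : ℂ) * Complex.I) := by
  set v := -(z * Complex.exp ((-α : ℂ) * Complex.I)) with hv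
  have hvz : v ≠ 0 := by
    rw [hv]
    simp only [ne_eq, neg_eq_zero, mul_eq_zero, not_or]
    exact ⟨hz, Complex.exp_ne_zero _⟩
  have habsv : ‖v‖ = ‖z‖ := by
    rw [hv]
    rw [norm_neg, norm_mul, Complex.norm_exp]
    simp
  have hargv : Complex.exp ((Complex.arg v : ℂ) * Complex.I) = v / (‖v‖ : ℂ) := by
    rw [eq_div_iff (Complex.ofReal_ne_zero.2 (by simpa using hvz)), mul_comm]
    exact Complex.norm_mul_exp_arg_mul_I _
  rw [argAbout]
  push_cast
  rw [add_mul, add_mul, Complex.exp_add, Complex.exp_add, hargv, habsv, Complex.exp_pi_mul_I, hv]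
  have habs0 : (‖z‖ : ℂ) ≠ 0 := Complex.ofReal_ne_zero.2 (by simpa using hz)
  field_simp
  ring_nf
  rw [← Complex.exp_add]
  simp
  
lemma argAbout_isLiftOn {α : ℝ} {w : ℝ → ℂ} {a b : ℝ}
    (hw : ContinuousOn w (Icc a b)) (h0 : ∀ t ∈ Icc a b, w t ≠ 0)
    (hray : ∀ t ∈ Icc a b, w t ∉ ray α) :
    IsLiftOn (fun t => argAbout α (w t)) w (Icc a b) := by
  constructor
  · apply ContinuousOn.add continuousOn_const
    have hv : ContinuousOn (fun t => -(w t * Complex.exp ((-α : ℂ) * Complex.I))) (Icc a b) :=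
      (hw.mul continuousOn_const).neg
    intro t ht
    exact ContinuousAt.comp_continuousWithinAt (g := Complex.arg)
      (Complex.continuousAt_arg (slitPlane_of_not_ray (h0 t ht) (hray t ht))) (hv t ht)
  · intro t ht
    exact argAbout_lift (h0 t ht)

/-- For a path avoiding the ray at angle `α`, any lift's endpoint difference is given by the
branch `argAbout α`. -/
lemma liftOn_endpoint_diff {θ : ℝ → ℝ} {w : ℝ → ℂ} {a b α : ℝ} (hab : a ≤ b)
    (hθ : IsLiftOn θ w (Icc a b)) (hw : ContinuousOn w (Icc a b))
    (h0 : ∀ t ∈ Icc a b, w t ≠ 0) (hray : ∀ t ∈ Icc a b, w t ∉ ray α) :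
    θ b - θ a = argAbout α (w b) - argAbout α (w a) := by
  have h2 := argAbout_isLiftOn hw h0 hray
  have := hθ.sub_eq h2 h0 (right_mem_Icc.2 hab)
  linarith

/-- First coordinate of the boundary loop of the unit square, time in `[0,4]`. -/
def bx (t : ℝ) : ℝ := max 0 (min 1 (min t (3 - t)))

/-- Second coordinate of the boundary loop of the unit square, time in `[0,4]`. -/
def by' (t : ℝ) : ℝ := max 0 (min 1 (min (t - 1) (4 - t)))

lemma bx_cont : Continuous bx :=
  continuous_const.max (continuous_const.min (continuous_id.min (continuous_const.sub continuous_id)))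

lemma by'_cont : Continuous by' :=
  continuous_const.max (continuous_const.min ((continuous_id.sub continuous_const).min
    (continuous_const.sub continuous_id)))

lemma bx_mem (t : ℝ) : bx t ∈ Icc (0:ℝ) 1 :=
  ⟨le_max_left _ _, max_le zero_le_one (min_le_left _ _)⟩

lemma by'_mem (t : ℝ) : by' t ∈ Icc (0:ℝ) 1 :=
  ⟨le_max_left _ _, max_le zero_le_one (min_le_left _ _)⟩

lemma bx_seg1 {t : ℝ} (ht : t ∈ Icc (0:ℝ) 1) : bx t = t := by
  rw [bx, min_eq_left (by linarith [ht.1, ht.2] : t ≤ 3 - t),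
    min_eq_right ht.2, max_eq_right ht.1]

lemma by'_seg1 {t : ℝ} (ht : t ∈ Icc (0:ℝ) 1) : by' t = 0 := by
  rw [by', min_eq_left (by linarith [ht.1, ht.2] : t - 1 ≤ 4 - t),
    min_eq_right (by linarith [ht.2]), max_eq_left (by linarith [ht.2])]

lemma bx_seg2 {t : ℝ} (ht : t ∈ Icc (1:ℝ) 2) : bx t = 1 := by
  rw [bx, min_eq_left (le_min ht.1 (by linarith [ht.2])), max_eq_right zero_le_one]

lemma by'_seg2 {t : ℝ} (ht : t ∈ Icc (1:ℝ) 2) : by' t = t - 1 := by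
  rw [by', min_eq_left (by linarith [ht.1, ht.2] : t - 1 ≤ 4 - t),
    min_eq_right (by linarith [ht.2]), max_eq_right (by linarith [ht.1])]

lemma bx_seg3 {t : ℝ} (ht : t ∈ Icc (2:ℝ) 3) : bx t = 3 - t := by
  rw [bx, min_eq_right (by linarith [ht.1, ht.2] : 3 - t ≤ t),
    min_eq_right (by linarith [ht.1]), max_eq_right (by linarith [ht.2])]

lemma by'_seg3 {t : ℝ} (ht : t ∈ Icc (2:ℝ) 3) : by' t = 1 := by
  rw [by', min_eq_left (le_min (by linarith [ht.1]) (by linarith [ht.2])),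
    max_eq_right zero_le_one]

lemma bx_seg4 {t : ℝ} (ht : t ∈ Icc (3:ℝ) 4) : bx t = 0 := by
  rw [bx, min_eq_right (by linarith [ht.1, ht.2] : 3 - t ≤ t),
    min_eq_right (by linarith [ht.1]), max_eq_left (by linarith [ht.1])]

lemma by'_seg4 {t : ℝ} (ht : t ∈ Icc (3:ℝ) 4) : by' t = 4 - t := by
  rw [by', min_eq_right (by linarith [ht.1, ht.2] : 4 - t ≤ t - 1),
    min_eq_right (by linarith [ht.1]), max_eq_right (by linarith [ht.2])]

/-- The plane point as a complex number. -/
def cpt (p : E2) : ℂ := ((p 0 : ℝ) : ℂ) + ((p 1 : ℝ) : ℂ) * Complex.I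

@[simp] lemma cpt_re (p : E2) : (cpt p).re = p 0 := by simp [cpt]
@[simp] lemma cpt_im (p : E2) : (cpt p).im = p 1 := by simp [cpt]

lemma cpt_inj {p q : E2} (h : cpt p = cpt q) : p = q := by
  have h1 := congrArg Complex.re h
  have h2 := congrArg Complex.im h
  simp only [cpt_re, cpt_im] at h1 h2
  ext i
  fin_cases i <;> assumption

lemma cpt_contOn {h : ℝ → E2} (hc : ContinuousOn h (Icc 0 1)) :
    ContinuousOn (fun s => cpt (h s)) (Icc (0:ℝ) 1) := by
  unfold cpt
  exact (Complex.continuous_ofReal.comp_continuousOn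
      (((EuclideanSpace.proj (0 : Fin 2)).continuous.comp_continuousOn hc))).add
    ((Complex.continuous_ofReal.comp_continuousOn
      (((EuclideanSpace.proj (1 : Fin 2)).continuous.comp_continuousOn hc))).mul continuousOn_const)

/-- The contracted boundary loop of the square, composed with `F - G`. -/
def loopF (F G : ℝ → ℂ) (r t : ℝ) : ℂ :=
  F (1/2 + r * (bx t - 1/2)) - G (1/2 + r * (by' t - 1/2))

lemma loop_coord_mem {r x : ℝ} (hr : r ∈ Icc (0:ℝ) 1) (hx : x ∈ Icc (0:ℝ) 1) :
    1/2 + r * (x - 1/2) ∈ Icc (0:ℝ) 1 := by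
  constructor <;> nlinarith [hr.1, hr.2, hx.1, hx.2]

lemma loopF_contOn_prod {F G : ℝ → ℂ} (hF : ContinuousOn F (Icc 0 1))
    (hG : ContinuousOn G (Icc 0 1)) :
    ContinuousOn (fun p : ℝ × ℝ => loopF F G p.1 p.2) (Icc 0 1 ×ˢ Icc 0 4) := by
  unfold loopF
  have c1 : Continuous fun p : ℝ × ℝ => 1/2 + p.1 * (bx p.2 - 1/2) :=
    continuous_const.add (continuous_fst.mul ((bx_cont.comp continuous_snd).sub continuous_const))
  have c2 : Continuous fun p : ℝ × ℝ => 1/2 + p.1 * (by' p.2 - 1/2) :=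
    continuous_const.add (continuous_fst.mul ((by'_cont.comp continuous_snd).sub continuous_const))
  refine ContinuousOn.sub ?_ ?_
  · exact hF.comp c1.continuousOn (fun p hp => loop_coord_mem hp.1 (bx_mem p.2))
  · exact hG.comp c2.continuousOn (fun p hp => loop_coord_mem hp.1 (by'_mem p.2))

lemma loopF_contOn {F G : ℝ → ℂ} (hF : ContinuousOn F (Icc 0 1))
    (hG : ContinuousOn G (Icc 0 1)) {r : ℝ} (hr : r ∈ Icc (0:ℝ) 1) :
    ContinuousOn (loopF F G r) (Icc 0 4) := by
  have := (loopF_contOn_prod hF hG).comp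
    (Continuous.continuousOn (continuous_const.prodMk continuous_id) : ContinuousOn (fun t : ℝ => (r, t)) (Icc 0 4))
    (fun t ht => mk_mem_prod hr ht)
  exact this

lemma exp_real_mul_I (x : ℝ) :
    Complex.exp ((x : ℂ) * Complex.I) = ((Real.cos x : ℝ) : ℂ) + ((Real.sin x : ℝ) : ℂ) * Complex.I := by
  rw [Complex.exp_mul_I, Complex.ofReal_cos, Complex.ofReal_sin]

/-- Two paths in the unit square joining opposite pairs of corners, whose interiors stay
in the open unit square, intersect in the open unit square. -/
theorem curves_intersect_open (f g : ℝ → E2)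
    (hfc : ContinuousOn f (Icc 0 1)) (hgc : ContinuousOn g (Icc 0 1))
    (hfm : MapsTo f (Icc 0 1) unitSq) (hgm : MapsTo g (Icc 0 1) unitSq)
    (hf0 : f 0 = pt 0 0) (hf1 : f 1 = pt 1 1)
    (hg0 : g 0 = pt 0 1) (hg1 : g 1 = pt 1 0)
    (hfo : ∀ t ∈ Ioo (0:ℝ) 1, f t ∈ openUnitSq)
    (hgo : ∀ t ∈ Ioo (0:ℝ) 1, g t ∈ openUnitSq) :
    ∃ s ∈ Ioo (0:ℝ) 1, ∃ t ∈ Ioo (0:ℝ) 1, f s = g t ∧ f s ∈ openUnitSq := by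
  by_contra hcon
  push_neg at hcon
  have hni : ∀ s ∈ Ioo (0:ℝ) 1, ∀ t ∈ Ioo (0:ℝ) 1, f s ≠ g t :=
    fun s hs t ht he => hcon s hs t ht he (hfo s hs)
  -- corner coordinates
  have hf00 : f 0 0 = 0 := by rw [hf0]; simp [pt]
  have hf01 : f 0 1 = 0 := by rw [hf0]; simp [pt]
  have hf10 : f 1 0 = 1 := by rw [hf1]; simp [pt]
  have hf11 : f 1 1 = 1 := by rw [hf1]; simp [pt]
  have hg00 : g 0 0 = 0 := by rw [hg0]; simp [pt]
  have hg01 : g 0 1 = 1 := by rw [hg0]; simp [pt]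
  have hg10 : g 1 0 = 1 := by rw [hg1]; simp [pt]
  have hg11 : g 1 1 = 0 := by rw [hg1]; simp [pt]
  have hIoo01 : ∀ u : ℝ, u ∈ Icc (0:ℝ) 1 → u = 0 ∨ u = 1 ∨ u ∈ Ioo (0:ℝ) 1 := by
    intro u hu
    rcases eq_or_lt_of_le hu.1 with h | h
    · exact Or.inl h.symm
    rcases eq_or_lt_of_le hu.2 with h2 | h2
    · exact Or.inr (Or.inl h2)
    · exact Or.inr (Or.inr ⟨h, h2⟩)
  -- the difference map is nonvanishing
  have key : ∀ s ∈ Icc (0:ℝ) 1, ∀ t ∈ Icc (0:ℝ) 1, cpt (f s) - cpt (g t) ≠ 0 := by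
    intro s hs t ht h
    have heq : cpt (f s) = cpt (g t) := sub_eq_zero.1 h
    have hco : f s = g t := cpt_inj heq
    have hc0 : f s 0 = g t 0 := by rw [hco]
    have hc1 : f s 1 = g t 1 := by rw [hco]
    rcases hIoo01 s hs with rfl | rfl | hsi
    · -- s = 0 : f s = (0,0)
      rcases hIoo01 t ht with rfl | rfl | hti
      · rw [hf01, hg01] at hc1; norm_num at hc1
      · rw [hf00, hg10] at hc0; norm_num at hc0
      · have := (hgo t hti).1
        rw [hf00] at hc0
        rw [← hc0] at this
        exact lt_irrefl _ this.1
    · -- s = 1 : f s = (1,1)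
      rcases hIoo01 t ht with rfl | rfl | hti
      · rw [hf10, hg00] at hc0; norm_num at hc0
      · rw [hf11, hg11] at hc1; norm_num at hc1
      · have := (hgo t hti).1
        rw [hf10] at hc0
        rw [← hc0] at this
        exact lt_irrefl _ this.2
    · rcases hIoo01 t ht with rfl | rfl | hti
      · have := (hfo s hsi).2
        rw [hg01] at hc1
        rw [hc1] at this
        exact lt_irrefl _ this.2
      · have := (hfo s hsi).1
        rw [hg10] at hc0
        rw [hc0] at this
        exact lt_irrefl _ this.2
      · exact hni s hsi t hti hco
  -- the loop family
  set ff : ℝ → ℂ := fun s => cpt (f s) with hff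
  set gg : ℝ → ℂ := fun s => cpt (g s) with hgg
  have hffc : ContinuousOn ff (Icc 0 1) := cpt_contOn hfc
  have hggc : ContinuousOn gg (Icc 0 1) := cpt_contOn hgc
  set w : ℝ → ℝ → ℂ := loopF ff gg with hwdef
  have hwcont : ∀ r ∈ Icc (0:ℝ) 1, ContinuousOn (w r) (Icc 0 4) :=
    fun r hr => loopF_contOn hffc hggc hr
  have hw0 : ∀ r ∈ Icc (0:ℝ) 1, ∀ t : ℝ, w r t ≠ 0 := by
    intro r hr t
    exact key _ (loop_coord_mem hr (bx_mem t)) _ (loop_coord_mem hr (by'_mem t))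
  have hloop : ∀ r : ℝ, w r 4 = w r 0 := by
    intro r
    have h1 : bx 4 = bx 0 := by
      rw [bx_seg4 (by norm_num), bx_seg1 (by norm_num)]
    have h2 : by' 4 = by' 0 := by
      rw [by'_seg4 (by norm_num), by'_seg1 (by norm_num)]
      norm_num
    simp only [hwdef, loopF, h1, h2]
  have hmem04 : (4:ℝ) ∈ Icc (0:ℝ) 4 := by norm_num
  have hmem04' : (0:ℝ) ∈ Icc (0:ℝ) 4 := by norm_num
  -- lifts
  have hlift : ∀ r, r ∈ Icc (0:ℝ) 1 → ∃ θ, IsLiftOn θ (w r) (Icc 0 4) :=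
    fun r hr => exists_liftOn (by norm_num) (hwcont r hr) (fun t _ => hw0 r hr t)
  choose! Θ hΘ using hlift
  set V : ℝ → ℝ := fun r => Θ r 4 - Θ r 0 with hVdef
  have huniq : ∀ r ∈ Icc (0:ℝ) 1, ∀ ψ : ℝ → ℝ, IsLiftOn ψ (w r) (Icc 0 4) → ψ 4 - ψ 0 = V r := by
    intro r hr ψ hψ
    have := hψ.sub_eq (hΘ r hr) (fun t _ => hw0 r hr t) hmem04
    simp only [hVdef]
    linarith
  -- V 0 = 0
  have hwconst : ∀ t : ℝ, w 0 t = w 0 0 := by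
    intro t
    simp only [hwdef, loopF]
    norm_num
  have hV0 : V 0 = 0 := by
    have hψ : IsLiftOn (fun _ => Complex.arg (w 0 0)) (w 0) (Icc 0 4) := by
      refine ⟨continuousOn_const, ?_⟩
      intro t _
      rw [hwconst t]
      exact (Complex.norm_mul_exp_arg_mul_I _).symm
    have := huniq 0 (by norm_num) _ hψ
    simpa using this.symm
  -- local constancy of V
  have hVloc : ∀ r₀ ∈ Icc (0:ℝ) 1, ∃ δ > 0, ∀ r ∈ Icc (0:ℝ) 1, |r - r₀| < δ → V r = V r₀ := by
    intro r₀ hr₀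
    obtain ⟨t₀, ht₀, hmin'⟩ := isCompact_Icc.exists_isMinOn
      (⟨0, hmem04'⟩ : (Icc (0:ℝ) 4).Nonempty)
      (continuous_norm.comp_continuousOn (hwcont r₀ hr₀))
    have hmin : ∀ t ∈ Icc (0:ℝ) 4, ‖w r₀ t₀‖ ≤ ‖w r₀ t‖ :=
      fun t ht => hmin' ht
    set ε := ‖w r₀ t₀‖ with hεdef
    have hε : 0 < ε := norm_pos_iff.2 (hw0 r₀ hr₀ t₀)
    have huc := (isCompact_Icc.prod isCompact_Icc).uniformContinuousOn_of_continuous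
      (loopF_contOn_prod hffc hggc)
    rw [Metric.uniformContinuousOn_iff] at huc
    obtain ⟨δ, hδpos, hδ⟩ := huc ε hε
    refine ⟨δ, hδpos, ?_⟩
    intro r hr hrr
    have hclose : ∀ t ∈ Icc (0:ℝ) 4, ‖w r t - w r₀ t‖ < ‖w r₀ t‖ := by
      intro t ht
      have hd : dist ((r, t) : ℝ × ℝ) ((r₀, t) : ℝ × ℝ) < δ := by
        rw [Prod.dist_eq]
        apply max_lt
        · rwa [Real.dist_eq]
        · simpa using hδpos
      have := hδ (r, t) (mk_mem_prod hr ht) (r₀, t) (mk_mem_prod hr₀ ht) hd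
      rw [Complex.dist_eq] at this
      calc ‖w r t - w r₀ t‖ < ε := this
        _ ≤ ‖w r₀ t‖ := hmin t ht
    have hψ : IsLiftOn (fun t => Θ r₀ t + Complex.arg (w r t / w r₀ t)) (w r) (Icc 0 4) := by
      constructor
      · apply (hΘ r₀ hr₀).1.add
        have hu : ContinuousOn (fun t => w r t / w r₀ t) (Icc 0 4) :=
          (hwcont r hr).div (hwcont r₀ hr₀) (fun t _ => hw0 r₀ hr₀ t)
        intro t ht
        exact ContinuousAt.comp_continuousWithinAt (g := Complex.arg)
          (Complex.continuousAt_arg (div_mem_slitPlane_of_close (hw0 r₀ hr₀ t) (hclose t ht)))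
          (hu t ht)
      · intro t ht
        exact lift_step_eq (hw0 r hr t) (hw0 r₀ hr₀ t) ((hΘ r₀ hr₀).2 t ht)
    have hVr := huniq r hr _ hψ
    rw [hloop r, hloop r₀] at hVr
    simp only [hVdef] at hVr ⊢
    linarith
  -- V is constant on [0,1] by connectedness
  choose! D hD using hVloc
  have hDpos : ∀ r ∈ Icc (0:ℝ) 1, 0 < D r := fun r hr => (hD r hr).1
  have hDeq : ∀ r ∈ Icc (0:ℝ) 1, ∀ r' ∈ Icc (0:ℝ) 1, |r' - r| < D r → V r' = V r :=
    fun r hr r' hr' h => (hD r hr).2 r' hr' h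
  have hV1 : V 1 = 2 * Real.pi := by
    have h1c : (1:ℝ) ∈ Icc (0:ℝ) 1 := by norm_num
    have hw1 : ∀ t : ℝ, w 1 t = ff (bx t) - gg (by' t) := by
      intro t
      simp only [hwdef, loopF]
      rw [show 1/2 + 1 * (bx t - 1/2) = bx t from by ring,
        show 1/2 + 1 * (by' t - 1/2) = by' t from by ring]
    -- exponential values
    have hexpA : Complex.exp ((↑(Real.pi/2) : ℂ) * Complex.I) = Complex.I := by
      rw [exp_real_mul_I]
      norm_num [Real.cos_pi_div_two, Real.sin_pi_div_two]
    have hexpB : Complex.exp (-(↑(Real.pi/2) : ℂ) * Complex.I) = -Complex.I := by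
      rw [show (-(↑(Real.pi/2) : ℂ)) = ((-(Real.pi/2) : ℝ) : ℂ) from by push_cast; ring,
        exp_real_mul_I]
      norm_num [Real.cos_pi_div_two, Real.sin_pi_div_two]
    have hexpC : Complex.exp (-(↑(Real.pi) : ℂ) * Complex.I) = -1 := by
      rw [show (-(↑(Real.pi) : ℂ)) = ((-Real.pi : ℝ) : ℂ) from by push_cast; ring,
        exp_real_mul_I]
      norm_num [Real.cos_pi, Real.sin_pi]
    have hexpC' : Complex.exp ((↑(Real.pi) : ℂ) * Complex.I) = -1 := Complex.exp_pi_mul_I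
    have hexpD : Complex.exp ((↑(-(Real.pi/2)) : ℂ) * Complex.I) = -Complex.I := by
      rw [exp_real_mul_I]
      norm_num [Real.cos_pi_div_two, Real.sin_pi_div_two]
    have hexpD' : Complex.exp (-(↑(-(Real.pi/2)) : ℂ) * Complex.I) = Complex.I := by
      rw [show (-(↑(-(Real.pi/2)) : ℂ)) = ((Real.pi/2 : ℝ) : ℂ) from by push_cast; ring]
      exact hexpA
    have hexpE : Complex.exp ((↑(0:ℝ) : ℂ) * Complex.I) = 1 := by
      norm_num
    have hexpE' : Complex.exp (-(↑(0:ℝ) : ℂ) * Complex.I) = 1 := by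
      norm_num
    -- values of the boundary loop at corners
    have hv0 : w 1 0 = -Complex.I := by
      rw [hw1 0, bx_seg1 (by norm_num), by'_seg1 (by norm_num)]
      simp only [hff, hgg, cpt, hf00, hf01, hg00, hg01]
      push_cast
      ring
    have hv1 : w 1 1 = 1 := by
      rw [hw1 1, bx_seg1 (by norm_num), by'_seg1 (by norm_num)]
      simp only [hff, hgg, cpt, hf10, hf11, hg00, hg01]
      push_cast
      ring
    have hv2 : w 1 2 = Complex.I := by
      rw [hw1 2, bx_seg2 (by norm_num), by'_seg2 (by norm_num)]
      norm_num
      simp only [hff, hgg, cpt, hf10, hf11, hg10, hg11]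
      push_cast
      ring
    have hv3 : w 1 3 = -1 := by
      rw [hw1 3, bx_seg3 (by norm_num), by'_seg3 (by norm_num)]
      norm_num
      simp only [hff, hgg, cpt, hf00, hf01, hg10, hg11]
      push_cast
      ring
    -- ray avoidance on the four edges
    have hray0 : ∀ t ∈ Icc (0:ℝ) 1, w 1 t ∉ ray (Real.pi/2) := by
      rintro t ht ⟨r, hr0, hreq⟩
      rw [hw1 t, bx_seg1 ht, by'_seg1 ht, hexpA] at hreq
      have hre := congrArg Complex.re hreq
      have him := congrArg Complex.im hreq
      simp only [hff, hgg, Complex.sub_re, Complex.sub_im, cpt_re, cpt_im, hg00, hg01,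
        Complex.mul_re, Complex.mul_im, Complex.I_re, Complex.I_im, Complex.ofReal_re,
        Complex.ofReal_im] at hre him
      norm_num at hre him
      rcases hIoo01 t ht with rfl | rfl | hti
      · rw [hf01] at him; linarith
      · rw [hf10] at hre; norm_num at hre
      · have := (hfo t hti).1.1; linarith
    have hray1 : ∀ t ∈ Icc (1:ℝ) 2, w 1 t ∉ ray Real.pi := by
      rintro t ht ⟨r, hr0, hreq⟩
      rw [hw1 t, bx_seg2 ht, by'_seg2 ht, hexpC'] at hreq
      have hre := congrArg Complex.re hreq
      have him := congrArg Complex.im hreq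
      simp only [hff, hgg, Complex.sub_re, Complex.sub_im, cpt_re, cpt_im, hf10, hf11,
        Complex.mul_re, Complex.mul_im, Complex.neg_re, Complex.neg_im, Complex.one_re,
        Complex.one_im, Complex.ofReal_re, Complex.ofReal_im] at hre him
      norm_num at hre him
      have hs : t - 1 ∈ Icc (0:ℝ) 1 := ⟨by linarith [ht.1], by linarith [ht.2]⟩
      rcases hIoo01 _ hs with h | h | h
      · rw [h, hg00] at hre; linarith
      · rw [h, hg11] at him; linarith
      · have := (hgo _ h).2.2; linarith
    have hray2 : ∀ t ∈ Icc (2:ℝ) 3, w 1 t ∉ ray (-(Real.pi/2)) := by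
      rintro t ht ⟨r, hr0, hreq⟩
      rw [hw1 t, bx_seg3 ht, by'_seg3 ht, hexpD] at hreq
      have hre := congrArg Complex.re hreq
      have him := congrArg Complex.im hreq
      simp only [hff, hgg, Complex.sub_re, Complex.sub_im, cpt_re, cpt_im, hg10, hg11,
        Complex.mul_re, Complex.mul_im, Complex.neg_re, Complex.neg_im, Complex.I_re,
        Complex.I_im, Complex.ofReal_re, Complex.ofReal_im] at hre him
      norm_num at hre him
      have hs : 3 - t ∈ Icc (0:ℝ) 1 := ⟨by linarith [ht.2], by linarith [ht.1]⟩
      rcases hIoo01 _ hs with h | h | h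
      · rw [h, hf00] at hre; linarith
      · rw [h, hf11] at him; linarith
      · have := (hfo _ h).1.2; linarith
    have hray3 : ∀ t ∈ Icc (3:ℝ) 4, w 1 t ∉ ray 0 := by
      rintro t ht ⟨r, hr0, hreq⟩
      rw [hw1 t, bx_seg4 ht, by'_seg4 ht, hexpE] at hreq
      have hre := congrArg Complex.re hreq
      have him := congrArg Complex.im hreq
      simp only [hff, hgg, Complex.sub_re, Complex.sub_im, cpt_re, cpt_im, hf00, hf01,
        Complex.mul_re, Complex.mul_im, Complex.one_re, Complex.one_im, Complex.ofReal_re,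
        Complex.ofReal_im] at hre him
      norm_num at hre him
      have hs : 4 - t ∈ Icc (0:ℝ) 1 := ⟨by linarith [ht.2], by linarith [ht.1]⟩
      rcases hIoo01 _ hs with h | h | h
      · rw [h, hg01] at him; linarith
      · rw [h, hg10] at hre; linarith
      · have := (hgo _ h).2.1; linarith
    -- edge differences via the canonical branch
    have hd0 := liftOn_endpoint_diff (by norm_num : (0:ℝ) ≤ 1)
      ((hΘ 1 h1c).mono (Icc_subset_Icc (le_refl _) (by norm_num)))
      ((hwcont 1 h1c).mono (Icc_subset_Icc (le_refl _) (by norm_num)))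
      (fun t _ => hw0 1 h1c t) hray0
    have hd1 := liftOn_endpoint_diff (by norm_num : (1:ℝ) ≤ 2)
      ((hΘ 1 h1c).mono (Icc_subset_Icc (by norm_num) (by norm_num)))
      ((hwcont 1 h1c).mono (Icc_subset_Icc (by norm_num) (by norm_num)))
      (fun t _ => hw0 1 h1c t) hray1
    have hd2 := liftOn_endpoint_diff (by norm_num : (2:ℝ) ≤ 3)
      ((hΘ 1 h1c).mono (Icc_subset_Icc (by norm_num) (by norm_num)))
      ((hwcont 1 h1c).mono (Icc_subset_Icc (by norm_num) (by norm_num)))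
      (fun t _ => hw0 1 h1c t) hray2
    have hd3 := liftOn_endpoint_diff (by norm_num : (3:ℝ) ≤ 4)
      ((hΘ 1 h1c).mono (Icc_subset_Icc (by norm_num) (by norm_num)))
      ((hwcont 1 h1c).mono (Icc_subset_Icc (by norm_num) (by norm_num)))
      (fun t _ => hw0 1 h1c t) hray3
    rw [hv0, hv1] at hd0
    rw [hv1, hv2] at hd1
    rw [hv2, hv3] at hd2
    rw [hv3, hloop 1, hv0] at hd3
    -- evaluate the branch values
    have ha00 : argAbout (Real.pi/2) (-Complex.I) = Real.pi/2 + Real.pi := by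
      rw [argAbout, hexpB,
        show -(-Complex.I * -Complex.I) = (1:ℂ) from by
          rw [neg_mul_neg, Complex.I_mul_I]; norm_num,
        Complex.arg_one, add_zero]
    have ha01 : argAbout (Real.pi/2) 1 = Real.pi/2 + Real.pi + Real.pi/2 := by
      rw [argAbout, hexpB,
        show -((1:ℂ) * -Complex.I) = Complex.I from by ring,
        Complex.arg_I]
    have ha10 : argAbout Real.pi 1 = Real.pi + Real.pi := by
      rw [argAbout, hexpC,
        show -((1:ℂ) * (-1)) = (1:ℂ) from by ring,
        Complex.arg_one, add_zero]
    have ha11 : argAbout Real.pi Complex.I = Real.pi + Real.pi + Real.pi/2 := by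
      rw [argAbout, hexpC,
        show -(Complex.I * (-1)) = Complex.I from by ring,
        Complex.arg_I]
    have ha20 : argAbout (-(Real.pi/2)) Complex.I = -(Real.pi/2) + Real.pi := by
      rw [argAbout, hexpD',
        show -(Complex.I * Complex.I) = (1:ℂ) from by rw [Complex.I_mul_I]; norm_num,
        Complex.arg_one, add_zero]
    have ha21 : argAbout (-(Real.pi/2)) (-1) = -(Real.pi/2) + Real.pi + Real.pi/2 := by
      rw [argAbout, hexpD',
        show -((-1:ℂ) * Complex.I) = Complex.I from by ring,
        Complex.arg_I]
    have ha30 : argAbout 0 (-1) = Real.pi := by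
      rw [argAbout, hexpE',
        show -((-1:ℂ) * 1) = (1:ℂ) from by ring,
        Complex.arg_one, add_zero, zero_add]
    have ha31 : argAbout 0 (-Complex.I) = Real.pi + Real.pi/2 := by
      rw [argAbout, hexpE',
        show -(-Complex.I * 1) = Complex.I from by ring,
        Complex.arg_I, zero_add]
    rw [ha00, ha01] at hd0
    rw [ha10, ha11] at hd1
    rw [ha20, ha21] at hd2
    rw [ha30, ha31] at hd3
    simp only [hVdef]
    linarith

  -- connectedness contradiction
  have hpre := isPreconnected_Icc (a := (0:ℝ)) (b := 1)
  set U : Set ℝ := ⋃ (r : ℝ) (_ : r ∈ Icc (0:ℝ) 1 ∧ V r = 0), Metric.ball r (D r) with hUdef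
  set W : Set ℝ := ⋃ (r : ℝ) (_ : r ∈ Icc (0:ℝ) 1 ∧ V r ≠ 0), Metric.ball r (D r) with hWdef
  have hUopen : IsOpen U := isOpen_iUnion (fun r => isOpen_iUnion (fun _ => Metric.isOpen_ball))
  have hWopen : IsOpen W := isOpen_iUnion (fun r => isOpen_iUnion (fun _ => Metric.isOpen_ball))
  have hcover : Icc (0:ℝ) 1 ⊆ U ∪ W := by
    intro r hr
    have hball : r ∈ Metric.ball r (D r) := Metric.mem_ball_self (hDpos r hr)
    by_cases h : V r = 0
    · exact Or.inl (mem_iUnion₂.2 ⟨r, ⟨hr, h⟩, hball⟩)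
    · exact Or.inr (mem_iUnion₂.2 ⟨r, ⟨hr, h⟩, hball⟩)
  have hUne : (Icc (0:ℝ) 1 ∩ U).Nonempty := by
    refine ⟨0, by norm_num, mem_iUnion₂.2 ⟨0, ⟨by norm_num, hV0⟩, ?_⟩⟩
    exact Metric.mem_ball_self (hDpos 0 (by norm_num))
  have hWne : (Icc (0:ℝ) 1 ∩ W).Nonempty := by
    refine ⟨1, by norm_num, mem_iUnion₂.2 ⟨1, ⟨by norm_num, ?_⟩, ?_⟩⟩
    · rw [hV1]
      positivity
    · exact Metric.mem_ball_self (hDpos 1 (by norm_num))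
  obtain ⟨r, hrIcc, hrU, hrW⟩ := hpre U W hUopen hWopen hcover hUne hWne
  obtain ⟨r₁, ⟨hr₁, hVr₁⟩, hball₁⟩ := mem_iUnion₂.1 hrU
  obtain ⟨r₂, ⟨hr₂, hVr₂⟩, hball₂⟩ := mem_iUnion₂.1 hrW
  have e1 : V r = 0 := by
    rw [← hVr₁]
    exact hDeq r₁ hr₁ r hrIcc (by rw [← Real.dist_eq]; exact Metric.mem_ball.1 hball₁)
  have e2 : V r ≠ 0 := by
    rw [show V r = V r₂ from
      hDeq r₂ hr₂ r hrIcc (by rw [← Real.dist_eq]; exact Metric.mem_ball.1 hball₂)]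
    exact hVr₂
  exact e2 e1
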